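/- For every k ∈ ℤ, H_1(k) = H_1(k+1), where H_1(k) := Q_{1,k+1}/Q_{1,k} + Q_{2,2k+1}²/(Q_{1,k}Q_{1,k+1}Q_{2,2k}) + Q_{1,k}Q_{2,2k+1}²/(Q_{1,k+1}Q_{2,2k}²) + 2·Q_{1,k}²/Q_{2,2k}² + Q_{1,k}³Q_{1,k+1}/(Q_{2,2k}²Q_{2,2k+1}²) + 2·Q_{1,k}Q_{1,k+1}/Q_{2,2k+1}² + 1/Q_{2,2k} + Q_{1,k+1}Q_{2,2k}²/(Q_{1,k}Q_{2,2k+1}²) + Q_{2,2k}/(Q_{1,k}Q_{1,k+1}) + Q_{1,k}/Q_{1,k+1}. That is, H_1 is a conserved quantity of the B_2 Q-system. -/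

import Mathlib

set_option maxHeartbeats 1000000 in
lemma hamB2_frac (a b c d : ℂ) (ha : a ≠ 0) (hb : b ≠ 0) (hc : c ≠ 0) (hd : d ≠ 0) :
    b / a + d ^ 2 / (a * b * c) + a * d ^ 2 / (b * c ^ 2) + 2 * a ^ 2 / c ^ 2
      + a ^ 3 * b / (c ^ 2 * d ^ 2) + 2 * (a * b) / d ^ 2 + 1 / c
      + b * c ^ 2 / (a * d ^ 2) + c / (a * b) + a / b
    = (b ^ 2 * c ^ 2 * d ^ 2 + c * d ^ 4 + a ^ 2 * d ^ 4 + 2 * a ^ 3 * b * d ^ 2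
        + a ^ 4 * b ^ 2 + 2 * a ^ 2 * b ^ 2 * c ^ 2 + a * b * c * d ^ 2
        + b ^ 2 * c ^ 4 + c ^ 3 * d ^ 2 + a ^ 2 * c ^ 2 * d ^ 2)
      / (a * b * c ^ 2 * d ^ 2) := by
  have hD : a * b * c ^ 2 * d ^ 2 ≠ 0 :=
    mul_ne_zero (mul_ne_zero (mul_ne_zero ha hb) (pow_ne_zero 2 hc)) (pow_ne_zero 2 hd)
  have t1 : b / a = b ^ 2 * c ^ 2 * d ^ 2 / (a * b * c ^ 2 * d ^ 2) := by
    rw [div_eq_div_iff ha hD]; ring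
  have t2 : d ^ 2 / (a * b * c) = c * d ^ 4 / (a * b * c ^ 2 * d ^ 2) := by
    rw [div_eq_div_iff (mul_ne_zero (mul_ne_zero ha hb) hc) hD]; ring
  have t3 : a * d ^ 2 / (b * c ^ 2) = a ^ 2 * d ^ 4 / (a * b * c ^ 2 * d ^ 2) := by
    rw [div_eq_div_iff (mul_ne_zero hb (pow_ne_zero 2 hc)) hD]; ring
  have t4 : 2 * a ^ 2 / c ^ 2 = 2 * a ^ 3 * b * d ^ 2 / (a * b * c ^ 2 * d ^ 2) := by
    rw [div_eq_div_iff (pow_ne_zero 2 hc) hD]; ring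
  have t5 : a ^ 3 * b / (c ^ 2 * d ^ 2) = a ^ 4 * b ^ 2 / (a * b * c ^ 2 * d ^ 2) := by
    rw [div_eq_div_iff (mul_ne_zero (pow_ne_zero 2 hc) (pow_ne_zero 2 hd)) hD]; ring
  have t6 : 2 * (a * b) / d ^ 2 = 2 * a ^ 2 * b ^ 2 * c ^ 2 / (a * b * c ^ 2 * d ^ 2) := by
    rw [div_eq_div_iff (pow_ne_zero 2 hd) hD]; ring
  have t7 : (1 : ℂ) / c = a * b * c * d ^ 2 / (a * b * c ^ 2 * d ^ 2) := by
    rw [div_eq_div_iff hc hD]; ring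
  have t8 : b * c ^ 2 / (a * d ^ 2) = b ^ 2 * c ^ 4 / (a * b * c ^ 2 * d ^ 2) := by
    rw [div_eq_div_iff (mul_ne_zero ha (pow_ne_zero 2 hd)) hD]; ring
  have t9 : c / (a * b) = c ^ 3 * d ^ 2 / (a * b * c ^ 2 * d ^ 2) := by
    rw [div_eq_div_iff (mul_ne_zero ha hb) hD]; ring
  have t10 : a / b = a ^ 2 * c ^ 2 * d ^ 2 / (a * b * c ^ 2 * d ^ 2) := by
    rw [div_eq_div_iff hb hD]; ring
  rw [t1, t2, t3, t4, t5, t6, t7, t8, t9, t10]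
  simp only [← add_div]

set_option maxHeartbeats 4000000 in
lemma hamB2_aux (a b c d e f g : ℂ)
    (ha : a ≠ 0) (hb : b ≠ 0) (hc : c ≠ 0) (hd : d ≠ 0)
    (he : e ≠ 0) (hf : f ≠ 0) (hg : g ≠ 0)
    (r1 : g * a = b ^ 2 + e)
    (r2 : e * c = d ^ 2 + a * b)
    (r3 : f * d = e ^ 2 + b ^ 2) :
    b / a + d ^ 2 / (a * b * c) + a * d ^ 2 / (b * c ^ 2) + 2 * a ^ 2 / c ^ 2
      + a ^ 3 * b / (c ^ 2 * d ^ 2) + 2 * (a * b) / d ^ 2 + 1 / c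
      + b * c ^ 2 / (a * d ^ 2) + c / (a * b) + a / b
    = g / b + f ^ 2 / (b * g * e) + b * f ^ 2 / (g * e ^ 2) + 2 * b ^ 2 / e ^ 2
      + b ^ 3 * g / (e ^ 2 * f ^ 2) + 2 * (b * g) / f ^ 2 + 1 / e
      + g * e ^ 2 / (b * f ^ 2) + e / (b * g) + b / g := by
  have hD1 : a * b * c ^ 2 * d ^ 2 ≠ 0 :=
    mul_ne_zero (mul_ne_zero (mul_ne_zero ha hb) (pow_ne_zero 2 hc)) (pow_ne_zero 2 hd)
  have hD2 : b * g * e ^ 2 * f ^ 2 ≠ 0 :=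
    mul_ne_zero (mul_ne_zero (mul_ne_zero hb hg) (pow_ne_zero 2 he)) (pow_ne_zero 2 hf)
  rw [hamB2_frac a b c d ha hb hc hd, hamB2_frac b g e f hb hg he hf,
    div_eq_div_iff hD1 hD2]
  apply mul_left_cancel₀ (a := a ^ 2 * c ^ 9 * d ^ 4)
    (mul_ne_zero (mul_ne_zero (pow_ne_zero 2 ha) (pow_ne_zero 9 hc)) (pow_ne_zero 4 hd))
  linear_combination (a*b*c^10*d^6*e^6 + (-1)*a*b*c^11*d^4*e^7 + (-1)*a*b*c^11*d^6*e^5 + a*b*c^12*d^4*e^6 + 2*a*b^3*c^10*d^6*e^4 + (-2)*a*b^3*c^11*d^4*e^5 + (-2)*a*b^3*c^11*d^6*e^3 + (-1)*a*b^3*c^11*d^6*e^4 + 2*a*b^3*c^12*d^4*e^4 + a*b^3*c^13*d^2*e^6 + a*b^5*c^10*d^6*e^2 + (-1)*a*b^5*c^11*d^4*e^3 + (-1)*a*b^5*c^11*d^6*e + (-2)*a*b^5*c^11*d^6*e^2 + a*b^5*c^12*d^4*e^2 + 2*a*b^5*c^13*d^2*e^4 + (-1)*a*b^7*c^11*d^6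 + a*b^7*c^13*d^2*e^2 + (-1)*a^2*b*c^11*d^4*e^6*g + (-1)*a^2*b*c^11*d^6*e^4*g + a^2*b^2*c^10*d^4*e^6 + (-1)*a^2*b^2*c^11*d^4*e^5 + (-2)*a^2*b^3*c^11*d^4*e^4*g + (-2)*a^2*b^3*c^11*d^6*e^2*g + 2*a^2*b^4*c^10*d^4*e^4 + (-2)*a^2*b^4*c^11*d^4*e^3 + (-2)*a^2*b^4*c^11*d^4*e^4 + (-1)*a^2*b^5*c^11*d^4*e^2*g + (-1)*a^2*b^5*c^11*d^6*g + a^2*b^6*c^10*d^4*e^2 + (-1)*a^2*b^6*c^11*d^4*e + (-4)*a^2*b^6*c^11*d^4*e^2 + (-2)*a^2*b^8*c^11*d^4 + a^3*b*c^9*d^6*e^6 + a^3*b*c^11*d^4*e^6 + 2*a^3*b^3*c^9*d^6*e^4 + 2*a^3*b^3*c^11*d^2*e^6 + 2*a^3*b^3*c^11*d^4*e^4 + a^3*b^5*c^9*d^6*e^2 + 4*a^3*b^5*c^11*d^2*e^4 + a^3*b^5*c^11*d^4*e^2 + 2*a^3*b^7*c^11*d^2*e^2 + 2*a^4*b^2*c^9*d^4*e^6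 + 4*a^4*b^4*c^9*d^4*e^4 + 2*a^4*b^6*c^9*d^4*e^2 + a^5*b^3*c^9*d^2*e^6 + 2*a^5*b^5*c^9*d^2*e^4 + a^5*b^7*c^9*d^2*e^2) * r1 +
    ((-1)*a*b*c^10*d^4*e^7 + a*b*c^11*d^4*e^6 + (-2)*a*b^3*c^10*d^4*e^5 + (-1)*a*b^3*c^10*d^4*e^6 + 2*a*b^3*c^11*d^4*e^4 + 2*a*b^3*c^11*d^4*e^5 + a*b^3*c^12*d^2*e^6 + (-1)*a*b^5*c^10*d^4*e^3 + (-2)*a*b^5*c^10*d^4*e^4 + a*b^5*c^11*d^4*e^2 + 4*a*b^5*c^11*d^4*e^3 + a*b^5*c^11*d^4*e^4 + 2*a*b^5*c^12*d^2*e^4 + a*b^5*c^12*d^2*e^5 + (-1)*a*b^7*c^10*d^4*e^2 + 2*a*b^7*c^11*d^4*e + 2*a*b^7*c^11*d^4*e^2 + a*b^7*c^12*d^2*e^2 + 2*a*b^7*c^12*d^2*e^3 + a*b^9*c^11*d^4 + a*b^9*c^12*d^2*e + a^2*b^4*c^11*d^2*e^5 + 2*a^2*b^6*c^11*d^2*e^3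 + a^2*b^6*c^11*d^2*e^4 + a^2*b^8*c^11*d^2*e + 2*a^2*b^8*c^11*d^2*e^2 + a^2*b^10*c^11*d^2 + (-1)*a^3*b*c^9*d^4*e^7 + (-1)*a^3*b*c^10*d^2*e^8 + (-2)*a^3*b^3*c^9*d^4*e^5 + (-1)*a^3*b^3*c^9*d^4*e^6 + (-2)*a^3*b^3*c^10*d^2*e^6 + (-1)*a^3*b^3*c^10*d^2*e^7 + (-1)*a^3*b^5*c^9*d^4*e^3 + (-2)*a^3*b^5*c^9*d^4*e^4 + (-1)*a^3*b^5*c^10*d^2*e^4 + (-2)*a^3*b^5*c^10*d^2*e^5 + (-1)*a^3*b^7*c^9*d^4*e^2 + (-1)*a^3*b^7*c^10*d^2*e^3 + (-1)*a^4*b^2*c^9*d^2*e^7 + (-2)*a^4*b^4*c^9*d^2*e^5 + (-1)*a^4*b^4*c^9*d^2*e^6 + (-1)*a^4*b^6*c^9*d^2*e^3 + (-2)*a^4*b^6*c^9*d^2*e^4 + (-1)*a^4*b^8*c^9*d^2*e^2) * r2 +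
    (a^2*b*c^10*d^6*e^4*g + a^2*b*c^10*d^7*e^2*f*g + a^2*b*c^12*d^4*e^4*g + a^2*b*c^12*d^5*e^2*f*g + a^2*b^3*c^10*d^6*e^2*g + a^2*b^3*c^11*d^4*e^4*g + a^2*b^3*c^11*d^5*e^2*f*g + a^2*b^3*c^12*d^4*e^2*g + a^2*b^3*c^13*d^2*e^4*g + a^2*b^3*c^13*d^3*e^2*f*g + a^2*b^5*c^11*d^4*e^2*g + a^2*b^5*c^13*d^2*e^2*g + (-1)*a^3*b*c^11*d^2*e^7 + (-1)*a^3*b*c^11*d^3*e^5*f + (-1)*a^3*b*c^11*d^4*e^3*f^2 + (-1)*a^3*b*c^11*d^4*e^4*g^2 + (-1)*a^3*b*c^11*d^4*e^5 + (-1)*a^3*b*c^11*d^5*e*f^3 + (-1)*a^3*b*c^11*d^5*e^2*f*g^2 + (-1)*a^3*b*c^11*d^5*e^3*f + a^3*b^2*c^10*d^4*e^4*g + a^3*b^2*c^10*d^5*e^2*f*g + (-1)*a^3*b^2*c^11*d^4*e^3*g + (-1)*a^3*b^2*c^11*d^5*e*f*g + (-3)*a^3*b^3*c^11*d^2*e^5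 + (-1)*a^3*b^3*c^11*d^2*e^6 + (-2)*a^3*b^3*c^11*d^3*e^3*f + (-1)*a^3*b^3*c^11*d^3*e^4*f + (-1)*a^3*b^3*c^11*d^4*e*f^2 + (-1)*a^3*b^3*c^11*d^4*e^2*g^2 + (-1)*a^3*b^3*c^11*d^4*e^2*f^2 + (-1)*a^3*b^3*c^11*d^4*e^3 + (-1)*a^3*b^3*c^11*d^4*e^4 + (-1)*a^3*b^3*c^11*d^5*f^3 + (-1)*a^3*b^3*c^11*d^5*e^2*f + a^3*b^4*c^10*d^4*e^2*g + (-1)*a^3*b^4*c^11*d^4*e*g + (-2)*a^3*b^4*c^11*d^4*e^2*g + (-2)*a^3*b^4*c^11*d^5*f*g + (-3)*a^3*b^5*c^11*d^2*e^3 + (-3)*a^3*b^5*c^11*d^2*e^4 + (-1)*a^3*b^5*c^11*d^3*e*f + (-2)*a^3*b^5*c^11*d^3*e^2*f + (-1)*a^3*b^5*c^11*d^4*f^2 + (-1)*a^3*b^5*c^11*d^4*e^2 + (-2)*a^3*b^6*c^11*d^4*g + (-1)*a^3*b^7*c^11*d^2*e + (-3)*a^3*b^7*c^11*d^2*e^2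 + (-1)*a^3*b^7*c^11*d^3*f + (-1)*a^3*b^9*c^11*d^2 + a^4*b*c^9*d^6*e^4*g + a^4*b*c^9*d^7*e^2*f*g + a^4*b*c^11*d^4*e^4*g + a^4*b*c^11*d^5*e^2*f*g + a^4*b^3*c^9*d^6*e^2*g + 2*a^4*b^3*c^11*d^2*e^4*g + 2*a^4*b^3*c^11*d^3*e^2*f*g + a^4*b^3*c^11*d^4*e^2*g + 2*a^4*b^5*c^11*d^2*e^2*g + 2*a^5*b^2*c^9*d^4*e^4*g + 2*a^5*b^2*c^9*d^5*e^2*f*g + 2*a^5*b^4*c^9*d^4*e^2*g + a^6*b^3*c^9*d^2*e^4*g + a^6*b^3*c^9*d^3*e^2*f*g + a^6*b^5*c^9*d^2*e^2*g) * r3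

/-- The Hamiltonian `H_1(k)` of the `B_2` Q-system: the partition function of
single hard particles, written out explicitly. -/
noncomputable def HamB2one (Q1 Q2 : ℤ → ℂ) (k : ℤ) : ℂ :=
  Q1 (k + 1) / Q1 k
    + Q2 (2 * k + 1) ^ 2 / (Q1 k * Q1 (k + 1) * Q2 (2 * k))
    + Q1 k * Q2 (2 * k + 1) ^ 2 / (Q1 (k + 1) * Q2 (2 * k) ^ 2)
    + 2 * Q1 k ^ 2 / Q2 (2 * k) ^ 2
    + Q1 k ^ 3 * Q1 (k + 1) / (Q2 (2 * k) ^ 2 * Q2 (2 * k + 1) ^ 2)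
    + 2 * (Q1 k * Q1 (k + 1)) / Q2 (2 * k + 1) ^ 2
    + 1 / Q2 (2 * k)
    + Q1 (k + 1) * Q2 (2 * k) ^ 2 / (Q1 k * Q2 (2 * k + 1) ^ 2)
    + Q2 (2 * k) / (Q1 k * Q1 (k + 1))
    + Q1 k / Q1 (k + 1)

/-- `H_1` is a conserved quantity of the `B_2` Q-system. -/
theorem HamB2one_conserved
    (Q1 Q2 : ℤ → ℂ)
    (h1ne : ∀ k : ℤ, Q1 k ≠ 0) (h2ne : ∀ k : ℤ, Q2 k ≠ 0)
    (hrec1 : ∀ k : ℤ, Q1 (k + 1) * Q1 (k - 1) = Q1 k ^ 2 + Q2 (2 * k))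
    (hrec2 : ∀ k : ℤ, Q2 (k + 1) * Q2 (k - 1) =
      Q2 k ^ 2 + Q1 (Int.fdiv k 2) * Q1 (Int.fdiv (k + 1) 2)) :
    ∀ k : ℤ, HamB2one Q1 Q2 k = HamB2one Q1 Q2 (k + 1) := by
  intro k
  have r1 : Q1 (k + 1 + 1) * Q1 k = Q1 (k + 1) ^ 2 + Q2 (2 * (k + 1)) := by
    have h := hrec1 (k + 1)
    rwa [show k + 1 - 1 = k by ring] at h
  have r2 : Q2 (2 * (k + 1)) * Q2 (2 * k) = Q2 (2 * k + 1) ^ 2 + Q1 k * Q1 (k + 1) := by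
    have h := hrec2 (2 * k + 1)
    rwa [show 2 * k + 1 + 1 = 2 * (k + 1) by ring, show 2 * k + 1 - 1 = 2 * k by ring,
      show Int.fdiv (2 * k + 1) 2 = k by rw [Int.fdiv_eq_ediv] <;> omega,
      show Int.fdiv (2 * (k + 1)) 2 = k + 1 by rw [Int.fdiv_eq_ediv] <;> omega] at h
  have r3 : Q2 (2 * (k + 1) + 1) * Q2 (2 * k + 1)
      = Q2 (2 * (k + 1)) ^ 2 + Q1 (k + 1) ^ 2 := by
    have h := hrec2 (2 * (k + 1))
    rwa [show 2 * (k + 1) - 1 = 2 * k + 1 by ring,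
      show Int.fdiv (2 * (k + 1)) 2 = k + 1 by rw [Int.fdiv_eq_ediv] <;> omega,
      show Int.fdiv (2 * (k + 1) + 1) 2 = k + 1 by rw [Int.fdiv_eq_ediv] <;> omega,
      ← sq] at h
  simp only [HamB2one]
  exact hamB2_aux (Q1 k) (Q1 (k + 1)) (Q2 (2 * k)) (Q2 (2 * k + 1))
    (Q2 (2 * (k + 1))) (Q2 (2 * (k + 1) + 1)) (Q1 (k + 1 + 1))
    (h1ne k) (h1ne (k + 1)) (h2ne (2 * k)) (h2ne (2 * k + 1))
    (h2ne (2 * (k + 1))) (h2ne (2 * (k + 1) + 1)) (h1ne (k + 1 + 1))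
    r1 r2 r3
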